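/- Let α ≥ 0 and define E'(α) = {x : a_n(x) = a_n(y) for n ≠ l^l, and a_{l^l}(x) = a_{l^l}(y) + l^{l+1} − (l−1)^l for all l ∈ ℕ, for some y with lim s_n(y)/n = α}. Define φ(n) = nα + (l−1)^l for (l−1)^{l−1} ≤ n < l^l, l ≥ 2. Then E'(α) ⊆ E_{φ(n)} = {x : lim_{n→∞} s_n(x)/φ(n) = 1}, and moreover liminf_{n→∞} φ(n)/n = α + e^{−1} and limsup_{n→∞} φ(n)/n = ∞. -/

import Mathlib

open Filter MeasureTheory Set

/-- The Gauss map. -/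
noncomputable def gaussMap (x : ℝ) : ℝ := Int.fract x⁻¹

/-- The `n`-th continued fraction partial quotient of `x` (1-indexed). -/
noncomputable def cfA (x : ℝ) (n : ℕ) : ℕ := ⌊(gaussMap^[n - 1] x)⁻¹⌋₊

/-- `s_n(x)`, the sum of the first `n` partial quotients. -/
noncomputable def cfS (x : ℝ) (n : ℕ) : ℕ := ∑ j ∈ Finset.Icc 1 n, cfA x j

lemma pow_self_le {a b : ℕ} (ha : 1 ≤ a) (h : a ≤ b) : a ^ a ≤ b ^ b :=
  le_trans (Nat.pow_le_pow_left h a) (Nat.pow_le_pow_right (le_trans ha h) h)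

lemma pow_self_lt {a b : ℕ} (ha : 1 ≤ a) (h : a < b) : a ^ a < b ^ b :=
  lt_of_lt_of_le (Nat.pow_lt_pow_left h (by omega)) (Nat.pow_le_pow_right (by omega) (le_of_lt h))

lemma exists_L (n : ℕ) (hn : 1 ≤ n) : ∃ L, 2 ≤ L ∧ (L-1)^(L-1) ≤ n ∧ n < L^L := by
  have hex : ∃ L, n < L ^ L := ⟨n + 1, lt_of_lt_of_le (Nat.lt_succ_self n) (Nat.le_self_pow (by omega) _)⟩
  classical
  set L := Nat.find hex with hL
  have hspec : n < L ^ L := Nat.find_spec hex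
  have h2 : 2 ≤ L := by
    rcases Nat.lt_or_ge L 2 with h | h
    · interval_cases L <;> simp at hspec <;> omega
    · exact h
  refine ⟨L, h2, ?_, hspec⟩
  have := Nat.find_min hex (m := L - 1) (by omega)
  omega

lemma tele (m : ℕ) : ∑ l ∈ Finset.Icc 1 m, (l^(l+1) - (l-1)^l) = m^(m+1) := by
  induction m with
  | zero => simp
  | succ m ih =>
    rw [Finset.sum_Icc_succ_top (by omega), ih]
    have h1 : m ^ (m+1) ≤ (m+1) ^ (m+2) :=
      le_trans (Nat.pow_le_pow_left (by omega) _) (Nat.pow_le_pow_right (by omega) (by omega))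
    have h2 : (m+1)^(m+2) = (m+1)^(m+1+1) := by ring
    simp only [Nat.add_sub_cancel]
    omega

lemma cfS_eq (x y : ℝ)
    (hA : ∀ n : ℕ, 1 ≤ n → (∀ l : ℕ, 1 ≤ l → n ≠ l ^ l) → cfA x n = cfA y n)
    (hB : ∀ l : ℕ, 1 ≤ l → cfA x (l ^ l) = cfA y (l ^ l) + (l ^ (l + 1) - (l - 1) ^ l))
    (L n : ℕ) (hL : 2 ≤ L) (h1 : (L-1)^(L-1) ≤ n) (h2 : n < L^L) :
    cfS x n = cfS y n + (L-1)^L := by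
  classical
  set S : Finset ℕ := (Finset.Icc 1 (L-1)).image (fun l => l^l) with hS
  have hsub : S ⊆ Finset.Icc 1 n := by
    intro j hj
    rw [hS, Finset.mem_image] at hj
    obtain ⟨l, hl, rfl⟩ := hj
    rw [Finset.mem_Icc] at hl ⊢
    exact ⟨Nat.one_le_pow _ _ (by omega), le_trans (pow_self_le hl.1 hl.2) h1⟩
  have hdiff : ∀ j ∈ Finset.Icc 1 n \ S, cfA x j = cfA y j := by
    intro j hj
    rw [Finset.mem_sdiff] at hj
    obtain ⟨hj1, hj2⟩ := hj
    rw [Finset.mem_Icc] at hj1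
    apply hA j hj1.1
    intro l hl heq
    by_cases hcase : l ≤ L - 1
    · exact hj2 (Finset.mem_image.mpr ⟨l, Finset.mem_Icc.mpr ⟨hl, hcase⟩, heq.symm⟩)
    · have hLl : L ≤ l := by omega
      have := pow_self_le (show 1 ≤ L by omega) hLl
      omega
  have hinj : ∀ a ∈ Finset.Icc 1 (L-1), ∀ b ∈ Finset.Icc 1 (L-1),
      (fun l => l^l) a = (fun l => l^l) b → a = b := by
    intro a ha b hb hab
    rw [Finset.mem_Icc] at ha hb
    simp only at hab
    rcases Nat.lt_trichotomy a b with h | h | h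
    · exact absurd hab (Nat.ne_of_lt (pow_self_lt ha.1 h))
    · exact h
    · exact absurd hab.symm (Nat.ne_of_lt (pow_self_lt hb.1 h))
  have himg : ∑ j ∈ S, cfA x j = ∑ j ∈ S, cfA y j + (L-1)^L := by
    rw [hS, Finset.sum_image hinj, Finset.sum_image hinj]
    have : ∑ l ∈ Finset.Icc 1 (L-1), cfA x (l^l)
        = ∑ l ∈ Finset.Icc 1 (L-1), (cfA y (l^l) + (l^(l+1) - (l-1)^l)) := by
      refine Finset.sum_congr rfl fun l hl => ?_
      rw [Finset.mem_Icc] at hl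
      exact hB l hl.1
    rw [this, Finset.sum_add_distrib, tele (L-1)]
    congr 1
    congr 1
    omega
  have hx := (Finset.sum_sdiff hsub (f := cfA x)).symm
  have hy := (Finset.sum_sdiff hsub (f := cfA y)).symm
  have hcongr : ∑ j ∈ Finset.Icc 1 n \ S, cfA x j = ∑ j ∈ Finset.Icc 1 n \ S, cfA y j :=
    Finset.sum_congr rfl hdiff
  rw [cfS, cfS, hx, hy, himg, hcongr]
  omega


lemma hkk : Tendsto (fun k : ℕ => (k:ℝ)^k) atTop atTop := by
  apply tendsto_atTop_mono' atTop ?_ tendsto_natCast_atTop_atTop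
  filter_upwards [eventually_ge_atTop 1] with k hk
  exact le_self_pow₀ (by exact_mod_cast hk) (by omega)

lemma lim_ratio : Tendsto (fun k : ℕ => ((k-1:ℕ):ℝ)^k / ((k:ℝ)^k - 1)) atTop
    (nhds (Real.exp 1)⁻¹) := by
  have ha := Real.tendsto_one_add_div_pow_exp (-1)
  have hb : Tendsto (fun k : ℕ => (k:ℝ)^k / ((k:ℝ)^k - 1)) atTop (nhds 1) := by
    have h1 : Tendsto (fun k : ℕ => (k:ℝ)^k - 1) atTop atTop :=
      tendsto_atTop_add_const_right _ (-1) hkk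
    have h2 : Tendsto (fun k : ℕ => ((k:ℝ)^k - 1)⁻¹) atTop (nhds 0) :=
      h1.inv_tendsto_atTop
    have h3 : Tendsto (fun k : ℕ => 1 + ((k:ℝ)^k - 1)⁻¹) atTop (nhds 1) := by
      simpa using h2.const_add 1
    apply h3.congr'
    filter_upwards [eventually_ge_atTop 2] with k hk
    have h4 : 1 < (k:ℝ)^k := one_lt_pow₀ (by exact_mod_cast hk) (by omega)
    have h5 : (k:ℝ)^k - 1 ≠ 0 := by linarith
    field_simp
    ring
  have hmul := ha.mul hb
  rw [mul_one, Real.exp_neg] at hmul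
  apply hmul.congr'
  filter_upwards [eventually_ge_atTop 2] with k hk
  have hk0 : (k:ℝ) ≠ 0 := Nat.cast_ne_zero.mpr (by omega)
  have hcast : ((k-1:ℕ):ℝ) = (k:ℝ) - 1 := by
    rw [Nat.cast_sub (by omega : 1 ≤ k), Nat.cast_one]
  have h4 : 1 < (k:ℝ)^k := one_lt_pow₀ (by exact_mod_cast hk) (by omega)
  have h5 : (k:ℝ)^k - 1 ≠ 0 := by linarith
  have h6 : (1 + (-1)/(k:ℝ)) = ((k:ℝ)-1)/k := by field_simp; ring
  rw [h6, hcast, div_pow]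
  field_simp

lemma phi_lower (α : ℝ) (φ : ℕ → ℝ)
    (hφ : ∀ l : ℕ, 2 ≤ l → ∀ n : ℕ, (l - 1) ^ (l - 1) ≤ n → n < l ^ l →
      φ n = (n : ℝ) * α + ((l - 1 : ℕ) : ℝ) ^ l)
    (ε : ℝ) (hε : 0 < ε) :
    ∀ᶠ n : ℕ in atTop, α + (Real.exp 1)⁻¹ - ε ≤ φ n / n := by
  have ha := Real.tendsto_one_add_div_pow_exp (-1)
  have hev : ∀ᶠ k : ℕ in atTop, (Real.exp 1)⁻¹ - ε < (1 + (-1)/(k:ℝ))^k :=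
    ha.eventually (eventually_gt_nhds (by rw [Real.exp_neg]; linarith))
  rw [eventually_atTop] at hev
  obtain ⟨K, hK⟩ := hev
  set K' := max K 2 with hK'
  filter_upwards [eventually_ge_atTop (K'^K')] with n hn
  have hn1 : 1 ≤ n := le_trans (Nat.one_le_pow _ _ (by omega)) hn
  obtain ⟨L, hL2, hLa, hLb⟩ := exists_L n hn1
  have hKL : K' ≤ L := by
    by_contra h
    push_neg at h
    have := pow_self_le (show 1 ≤ L by omega) (show L ≤ K' by omega)
    omega
  rw [hφ L hL2 n hLa hLb]
  have hnpos : (0:ℝ) < n := by exact_mod_cast hn1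
  have hL0 : (L:ℝ) ≠ 0 := Nat.cast_ne_zero.mpr (by omega)
  have hdiv : ((n:ℝ) * α + ((L-1:ℕ):ℝ)^L) / n = α + ((L-1:ℕ):ℝ)^L / n := by
    rw [add_div, mul_div_cancel_left₀ α (ne_of_gt hnpos)]
  rw [hdiv]
  have hnL : (n:ℝ) ≤ (L:ℝ)^L := by
    have : n ≤ L^L := le_of_lt hLb
    exact_mod_cast this
  have hnum : (0:ℝ) ≤ ((L-1:ℕ):ℝ)^L := by positivity
  have hstep : ((L-1:ℕ):ℝ)^L/(L:ℝ)^L ≤ ((L-1:ℕ):ℝ)^L/n :=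
    div_le_div_of_nonneg_left hnum hnpos hnL
  have heq : ((L-1:ℕ):ℝ)^L/(L:ℝ)^L = (1 + (-1)/(L:ℝ))^L := by
    have hcast : ((L-1:ℕ):ℝ) = (L:ℝ) - 1 := by
      rw [Nat.cast_sub (by omega : 1 ≤ L), Nat.cast_one]
    have h6 : (1 + (-1)/(L:ℝ)) = ((L:ℝ)-1)/L := by field_simp; ring
    rw [h6, hcast, div_pow]
  have hKbd := hK L (le_trans (le_max_left _ _) hKL)
  rw [heq] at hstep
  linarith

lemma part1 (α : ℝ) (hα : 0 < α) (φ : ℕ → ℝ)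
    (hφ : ∀ l : ℕ, 2 ≤ l → ∀ n : ℕ, (l - 1) ^ (l - 1) ≤ n → n < l ^ l →
      φ n = (n : ℝ) * α + ((l - 1 : ℕ) : ℝ) ^ l)
    (x y : ℝ)
    (hylim : Tendsto (fun n => (cfS y n : ℝ) / n) atTop (nhds α))
    (hA : ∀ n : ℕ, 1 ≤ n → (∀ l : ℕ, 1 ≤ l → n ≠ l ^ l) → cfA x n = cfA y n)
    (hB : ∀ l : ℕ, 1 ≤ l → cfA x (l ^ l) = cfA y (l ^ l) + (l ^ (l + 1) - (l - 1) ^ l)) :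
    Tendsto (fun n => (cfS x n : ℝ) / φ n) atTop (nhds 1) := by
  rw [Metric.tendsto_atTop] at hylim ⊢
  intro ε hε
  obtain ⟨N, hN⟩ := hylim (ε * α) (by positivity)
  refine ⟨max N 1, fun n hn => ?_⟩
  have hn1 : 1 ≤ n := le_trans (le_max_right _ _) hn
  obtain ⟨L, hL2, hLa, hLb⟩ := exists_L n hn1
  have hφn : φ n = (n : ℝ) * α + ((L - 1 : ℕ) : ℝ) ^ L := hφ L hL2 n hLa hLb
  have hcf : cfS x n = cfS y n + (L-1)^L := cfS_eq x y hA hB L n hL2 hLa hLb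
  have hc : (0:ℝ) ≤ ((L - 1 : ℕ) : ℝ) ^ L := by positivity
  have hnpos : (0:ℝ) < n := by exact_mod_cast hn1
  have hden : 0 < φ n := by rw [hφn]; nlinarith
  have hy := hN n (le_trans (le_max_left _ _) hn)
  rw [Real.dist_eq] at hy ⊢
  have h1 : (cfS x n : ℝ) = (cfS y n : ℝ) + ((L - 1 : ℕ) : ℝ) ^ L := by
    rw [hcf]; push_cast; ring
  have key : (cfS x n : ℝ) / φ n - 1 = ((cfS y n : ℝ) - n * α) / φ n := by
    have hD := hden
    rw [hφn] at hD
    rw [h1, hφn, div_sub_one (ne_of_gt hD)]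
    congr 1
    ring
  rw [key, abs_div, abs_of_pos hden, div_lt_iff₀ hden]
  have hnum : |(cfS y n : ℝ) - n * α| < ε * α * n := by
    have heq : |(cfS y n : ℝ) - n * α| = |(cfS y n : ℝ) / n - α| * n := by
      rw [← abs_of_pos hnpos, ← abs_mul]
      congr 1
      field_simp
      rw [abs_of_pos hnpos]
      ring
    rw [heq]
    exact (mul_lt_mul_of_pos_right hy hnpos)
  calc |(cfS y n : ℝ) - n * α| < ε * α * n := hnum
    _ ≤ ε * φ n := by rw [hφn]; nlinarith

theorem stmt_17 (α : ℝ) (hα : 0 < α) (φ : ℕ → ℝ)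
    (hφ : ∀ l : ℕ, 2 ≤ l → ∀ n : ℕ, (l - 1) ^ (l - 1) ≤ n → n < l ^ l →
      φ n = (n : ℝ) * α + ((l - 1 : ℕ) : ℝ) ^ l) :
    (∀ x : ℝ, x ∈ Set.Ioo (0 : ℝ) 1 → Irrational x →
      (∃ y : ℝ, y ∈ Set.Ioo (0 : ℝ) 1 ∧ Irrational y ∧
        Tendsto (fun n => (cfS y n : ℝ) / n) atTop (nhds α) ∧
        (∀ n : ℕ, 1 ≤ n → (∀ l : ℕ, 1 ≤ l → n ≠ l ^ l) → cfA x n = cfA y n) ∧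
        (∀ l : ℕ, 1 ≤ l → cfA x (l ^ l) = cfA y (l ^ l) + (l ^ (l + 1) - (l - 1) ^ l))) →
      Tendsto (fun n => (cfS x n : ℝ) / φ n) atTop (nhds 1)) ∧
    Filter.liminf (fun n => ((φ n / n : ℝ) : EReal)) atTop
      = ((α + (Real.exp 1)⁻¹ : ℝ) : EReal) ∧
    Filter.limsup (fun n => ((φ n / n : ℝ) : EReal)) atTop = (⊤ : EReal) := by
  refine ⟨?_, ?_, ?_⟩
  · rintro x hx hxirr ⟨y, hy, hyirr, hylim, hA, hB⟩
    exact part1 α hα φ hφ x y hylim hA hB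
  · apply le_antisymm
    · have hu : Tendsto (fun k : ℕ => k^k - 1) atTop atTop := by
        apply tendsto_atTop_mono' atTop ?_ (tendsto_sub_atTop_nat 1)
        filter_upwards [eventually_ge_atTop 1] with k hk
        have : k ≤ k^k := Nat.le_self_pow (by omega) k
        omega
      have hreal : Tendsto (fun k : ℕ => φ (k^k - 1) / ((k^k - 1 : ℕ) : ℝ)) atTop
          (nhds (α + (Real.exp 1)⁻¹)) := by
        apply Tendsto.congr' _ (tendsto_const_nhds.add lim_ratio)
        filter_upwards [eventually_ge_atTop 2] with k hk
        have hc1 : (k-1)^(k-1) ≤ k^k - 1 := by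
          have := pow_self_lt (show 1 ≤ k-1 by omega) (show k-1 < k by omega)
          omega
        have h1k : 1 ≤ k^k := Nat.one_le_pow _ _ (by omega)
        have hc2 : k^k - 1 < k^k := by omega
        rw [hφ k hk _ hc1 hc2]
        have hcast : ((k^k - 1 : ℕ):ℝ) = (k:ℝ)^k - 1 := by
          rw [Nat.cast_sub h1k]
          push_cast
          ring
        rw [hcast]
        have h4 : 1 < (k:ℝ)^k := one_lt_pow₀ (by exact_mod_cast hk) (by omega)
        have hd : (k:ℝ)^k - 1 ≠ 0 := by linarith
        field_simp
      have hcoe : Tendsto ((fun n : ℕ => ((φ n / n : ℝ) : EReal)) ∘ (fun k : ℕ => k^k - 1))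
          atTop (nhds ((α + (Real.exp 1)⁻¹ : ℝ) : EReal)) :=
        EReal.tendsto_coe.mpr hreal
      calc liminf (fun n : ℕ => ((φ n / n : ℝ) : EReal)) atTop
          ≤ liminf (fun n : ℕ => ((φ n / n : ℝ) : EReal)) (map (fun k : ℕ => k^k - 1) atTop) :=
            liminf_le_liminf_of_le hu
        _ = liminf ((fun n : ℕ => ((φ n / n : ℝ) : EReal)) ∘ (fun k : ℕ => k^k - 1)) atTop :=
            (liminf_comp _ _ _).symm
        _ = ((α + (Real.exp 1)⁻¹ : ℝ) : EReal) := hcoe.liminf_eq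
    · have hbd : ∀ ε : ℝ, 0 < ε →
          ((α + (Real.exp 1)⁻¹ - ε : ℝ) : EReal) ≤
            liminf (fun n : ℕ => ((φ n / n : ℝ) : EReal)) atTop := by
        intro ε hε
        refine le_liminf_of_le (by isBoundedDefault) ?_
        filter_upwards [phi_lower α φ hφ ε hε] with n hn
        exact_mod_cast hn
      apply le_of_forall_lt
      intro c hc
      induction c using EReal.rec with
      | bot => exact lt_of_lt_of_le (EReal.bot_lt_coe _) (hbd 1 one_pos)
      | coe c =>
        rw [EReal.coe_lt_coe_iff] at hc
        refine lt_of_lt_of_le ?_ (hbd ((α + (Real.exp 1)⁻¹ - c)/2) (by linarith))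
        rw [EReal.coe_lt_coe_iff]
        linarith
      | top => exact absurd hc (not_top_lt)
  · have hu : Tendsto (fun k : ℕ => k^k) atTop atTop := by
      apply tendsto_atTop_mono' atTop ?_ tendsto_id
      filter_upwards [eventually_ge_atTop 1] with k hk
      exact Nat.le_self_pow (by omega) k
    have hreal : Tendsto (fun k : ℕ => φ (k^k) / ((k^k : ℕ) : ℝ)) atTop atTop := by
      apply Tendsto.congr' _ (tendsto_atTop_add_const_left atTop α tendsto_natCast_atTop_atTop)
      filter_upwards [eventually_ge_atTop 1] with k hk
      have h := hφ (k+1) (by omega) (k^k) (by simp) (pow_self_lt hk (by omega))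
      simp only [Nat.add_sub_cancel] at h
      rw [h]
      have hk0 : (0:ℝ) < (k:ℝ) := by exact_mod_cast hk
      push_cast
      rw [eq_div_iff (by positivity)]
      ring
    have hcoe : Tendsto ((fun n : ℕ => ((φ n / n : ℝ) : EReal)) ∘ (fun k : ℕ => k^k))
        atTop (nhds (⊤ : EReal)) := by
      rw [EReal.tendsto_nhds_top_iff_real]
      intro z
      filter_upwards [hreal.eventually_gt_atTop z] with k hk
      simp only [Function.comp_apply]
      exact_mod_cast EReal.coe_lt_coe_iff.mpr hk
    apply top_le_iff.mp
    calc (⊤ : EReal) = limsup ((fun n : ℕ => ((φ n / n : ℝ) : EReal)) ∘ (fun k : ℕ => k^k)) atTop :=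
          hcoe.limsup_eq.symm
      _ = limsup (fun n : ℕ => ((φ n / n : ℝ) : EReal)) (map (fun k : ℕ => k^k) atTop) :=
          limsup_comp _ _ _
      _ ≤ limsup (fun n : ℕ => ((φ n / n : ℝ) : EReal)) atTop := limsup_le_limsup_of_le hu
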